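/- For Euclidean d-space, the maximum cardinality of an M-set is d+1, i.e., m(ℓ_2^d) = d+1. -/

import Mathlib

def IsMSet (X : Type*) [NormedAddCommGroup X] (S : Set X) : Prop :=
  (∀ x ∈ S, 1 < ‖x‖) ∧ ∀ x ∈ S, ∀ y ∈ S, x ≠ y → ‖x + y‖ = 2

open Finset


open Finset InnerProductSpace in
lemma no_big_mset (d : ℕ) (f : Fin (d+2) → EuclideanSpace ℝ (Fin d))
    (hnorm : ∀ i, 1 < ‖f i‖)
    (hadd : ∀ i j, i ≠ j → ‖f i + f j‖ = 2) : False := by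
  classical
  have hnli : ¬ LinearIndependent ℝ (fun i : Fin (d+2) => ((f i, 1) : EuclideanSpace ℝ (Fin d) × ℝ)) := by
    intro h
    have := h.fintype_card_le_finrank
    simp [Module.finrank_prod, finrank_euclideanSpace_fin, Fintype.card_fin] at this
  rw [Fintype.not_linearIndependent_iff] at hnli
  obtain ⟨g, hg, i0, hi0⟩ := hnli
  have h1 : ∑ i, g i • f i = (0 : EuclideanSpace ℝ (Fin d)) := by
    have := congrArg Prod.fst hg
    simpa [Prod.fst_sum] using this
  have h2 : ∑ i, g i = 0 := by
    have := congrArg Prod.snd hg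
    simpa [Prod.snd_sum] using this
  set c : Fin (d+2) → ℝ := fun i => ‖f i‖ ^ 2 with hc
  have hip : ∀ i j, g i * g j * ⟪f i, f j⟫_ℝ
      = g i * g j * (2 - c i / 2 - c j / 2) + (if i = j then g i ^ 2 * (2 * c i - 2) else 0) := by
    intro i j
    by_cases hij : i = j
    · subst hij
      rw [if_pos rfl, real_inner_self_eq_norm_sq]
      simp only [hc]
      ring
    · have h4 : ‖f i + f j‖ ^ 2 = 4 := by rw [hadd i j hij]; norm_num
      rw [norm_add_sq_real] at h4
      have : ⟪f i, f j⟫_ℝ = 2 - c i / 2 - c j / 2 := by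
        simp only [hc]; linarith
      rw [this, if_neg hij]
      ring
  have hdouble : (0 : ℝ) = ∑ i, ∑ j, g i * g j * ⟪f i, f j⟫_ℝ := by
    have h0 : (0:ℝ) = ⟪(0:EuclideanSpace ℝ (Fin d)), (0:EuclideanSpace ℝ (Fin d))⟫_ℝ := by simp
    rw [h0]
    nth_rewrite 1 [← h1]
    nth_rewrite 1 [← h1]
    rw [sum_inner]
    refine Finset.sum_congr rfl fun i _ => ?_
    rw [inner_sum]
    refine Finset.sum_congr rfl fun j _ => ?_
    rw [real_inner_smul_left, real_inner_smul_right]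
    ring
  simp_rw [hip, Finset.sum_add_distrib] at hdouble
  set T : ℝ := ∑ j, g j * c j with hT
  have inner0 : ∀ i : Fin (d+2), ∑ j, g i * g j * (2 - c i / 2 - c j / 2)
      = g i * (-T / 2) := by
    intro i
    have hx : ∀ j, g i * g j * (2 - c i / 2 - c j / 2)
        = g i * ((2 - c i / 2) * g j - (g j * c j) / 2) := by intros; ring
    simp_rw [hx, ← Finset.mul_sum, Finset.sum_sub_distrib, ← Finset.mul_sum,
      ← Finset.sum_div, h2, ← hT]
    ring
  have hz1 : ∑ i, ∑ j, g i * g j * (2 - c i / 2 - c j / 2) = 0 := by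
    simp_rw [inner0, ← Finset.sum_mul, h2, zero_mul]
  have hz2 : ∑ i : Fin (d+2), ∑ j : Fin (d+2), (if i = j then g i ^ 2 * (2 * c i - 2) else 0)
      = ∑ i : Fin (d+2), g i ^ 2 * (2 * c i - 2) := by
    refine Finset.sum_congr rfl fun i _ => ?_
    simp
  rw [hz1, hz2, zero_add] at hdouble
  have hkey : ∀ i, 1 < c i := by
    intro i
    have := hnorm i
    simp only [hc]; nlinarith
  have hpos : 0 < ∑ i : Fin (d+2), g i ^ 2 * (2 * c i - 2) := by
    refine Finset.sum_pos' (fun i _ => ?_) ⟨i0, Finset.mem_univ i0, ?_⟩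
    · have := hkey i
      nlinarith [sq_nonneg (g i)]
    · have := hkey i0
      have h0 : 0 < g i0 ^ 2 := by positivity
      nlinarith
  linarith

lemma mset_bound (d : ℕ) (S : Set (EuclideanSpace ℝ (Fin d)))
    (hS : IsMSet (EuclideanSpace ℝ (Fin d)) S) : S.Finite ∧ S.ncard ≤ d + 1 := by
  classical
  have claim : ∀ t : Set (EuclideanSpace ℝ (Fin d)), t ⊆ S → t.Finite → t.ncard ≠ d + 2 := by
    intro t hts htf htc
    have : Fintype t := htf.fintype
    have hcard : Fintype.card t = d + 2 := by
      rwa [Set.ncard_eq_toFinset_card' t, Set.toFinset_card] at htc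
    let e := Fintype.equivFinOfCardEq hcard
    refine no_big_mset d (fun i => (e.symm i : EuclideanSpace ℝ (Fin d))) ?_ ?_
    · intro i
      exact hS.1 _ (hts (e.symm i).2)
    · intro i j hij
      refine hS.2 _ (hts (e.symm i).2) _ (hts (e.symm j).2) ?_
      intro h
      exact hij (by simpa using e.symm.injective (Subtype.ext h))
  have hfin : S.Finite := by
    by_contra h
    obtain ⟨t, hts, htf, htc⟩ := (Set.not_infinite.not_right.mpr h : S.Infinite).exists_subset_ncard_eq (d+2)
    exact claim t hts htf htc
  refine ⟨hfin, ?_⟩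
  by_contra h
  push_neg at h
  obtain ⟨t, hts, htc⟩ := Set.exists_subset_card_eq (show d + 2 ≤ S.ncard by omega)
  exact claim t hts (hfin.subset hts) htc


noncomputable def vfam (d : ℕ) (A B C : ℝ) : Fin (d+1) → EuclideanSpace ℝ (Fin d) :=
  fun i => WithLp.toLp 2 (fun k : Fin d => if (i : ℕ) = d then C else if (k : ℕ) = (i : ℕ) then A else B :
    Fin d → ℝ)

lemma vfam_apply (d : ℕ) (A B C : ℝ) (i : Fin (d+1)) (k : Fin d) :
    vfam d A B C i k = if (i : ℕ) = d then C else if (k : ℕ) = (i : ℕ) then A else B := rfl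

lemma vfam_add_apply (d : ℕ) (A B C : ℝ) (i j : Fin (d+1)) (k : Fin d) :
    (vfam d A B C i + vfam d A B C j) k = vfam d A B C i k + vfam d A B C j k := rfl

lemma sum_one {d : ℕ} (a : Fin d) (F : Fin d → ℝ) (p q : ℝ)
    (hF : ∀ k, F k = if k = a then p else q) :
    ∑ k, F k = (d : ℝ) * q + (p - q) := by
  have : ∀ k, F k = q + (if k = a then p - q else 0) := by
    intro k
    rw [hF k]
    by_cases h : k = a <;> simp [h]
  simp_rw [this, Finset.sum_add_distrib, Finset.sum_const, Finset.sum_ite_eq',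
    Finset.mem_univ, if_pos, card_univ, Fintype.card_fin, nsmul_eq_mul]

lemma sum_two {d : ℕ} (a b : Fin d) (hab : a ≠ b) (F : Fin d → ℝ) (p1 p2 q : ℝ)
    (hF : ∀ k, F k = if k = a then p1 else if k = b then p2 else q) :
    ∑ k, F k = (d : ℝ) * q + (p1 - q) + (p2 - q) := by
  have : ∀ k, F k = q + (if k = a then p1 - q else 0) + (if k = b then p2 - q else 0) := by
    intro k
    rw [hF k]
    by_cases h1 : k = a
    · subst h1
      rw [if_pos rfl, if_pos rfl, if_neg hab]
      ring
    · by_cases h2 : k = b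
      · subst h2
        rw [if_neg h1, if_pos rfl, if_neg h1, if_pos rfl]
        ring
      · rw [if_neg h1, if_neg h2, if_neg h1, if_neg h2]
        ring
  simp_rw [this, Finset.sum_add_distrib, Finset.sum_const, Finset.sum_ite_eq',
    Finset.mem_univ, if_pos, card_univ, Fintype.card_fin, nsmul_eq_mul]

lemma norm_eq_sqrt_sum {d : ℕ} (x : EuclideanSpace ℝ (Fin d)) :
    ‖x‖ = Real.sqrt (∑ k, (x k) ^ 2) := by
  rw [EuclideanSpace.norm_eq]
  congr 1
  refine Finset.sum_congr rfl fun k _ => ?_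
  rw [Real.norm_eq_abs, sq_abs]

lemma mset_exists_ge_two (d : ℕ) (hd : 2 ≤ d) :
    ∃ S : Set (EuclideanSpace ℝ (Fin d)),
      IsMSet (EuclideanSpace ℝ (Fin d)) S ∧ S.ncard = d + 1 := by
  classical
  obtain ⟨n, hn⟩ : ∃ x : ℝ, x = (d : ℝ) := ⟨_, rfl⟩
  have hn2 : 2 ≤ n := by rw [hn]; exact_mod_cast hd
  have hn0 : n ≠ 0 := by linarith
  have hn1 : (0:ℝ) < n - 1 := by linarith
  obtain ⟨s, hs⟩ : ∃ x : ℝ, x = Real.sqrt (2 / (n - 1)) := ⟨_, rfl⟩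
  obtain ⟨r, hr⟩ : ∃ x : ℝ, x = Real.sqrt (n + 1) := ⟨_, rfl⟩
  have hs0 : 0 < s := by rw [hs]; exact Real.sqrt_pos.mpr (by positivity)
  have hr1 : 1 < r := by
    rw [hr]
    nlinarith [Real.sq_sqrt (show (0:ℝ) ≤ n + 1 by linarith), Real.sqrt_nonneg (n+1)]
  have hs2 : s ^ 2 * (n - 1) = 2 := by
    rw [hs, Real.sq_sqrt (by positivity : (0:ℝ) ≤ 2 / (n-1))]
    field_simp
  have hr2 : r ^ 2 = n + 1 := by rw [hr]; exact Real.sq_sqrt (by linarith)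
  obtain ⟨X, hX⟩ : ∃ x : ℝ, x = s * (1 + (n - 1) * r) := ⟨_, rfl⟩
  obtain ⟨Y, hY⟩ : ∃ x : ℝ, x = s * (1 - r) := ⟨_, rfl⟩
  obtain ⟨A, hA⟩ : ∃ x : ℝ, x = X / n := ⟨_, rfl⟩
  obtain ⟨B, hB⟩ : ∃ x : ℝ, x = Y / n := ⟨_, rfl⟩
  obtain ⟨C, hC⟩ : ∃ x : ℝ, x = -s := ⟨_, rfl⟩
  -- polynomial identities
  have P1 : X ^ 2 + (n - 1) * Y ^ 2 = n ^ 3 * s ^ 2 := by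
    rw [hX, hY]; linear_combination s ^ 2 * n * (n - 1) * hr2
  have P3 : 2 * (X + Y) ^ 2 + (n - 2) * 4 * Y ^ 2 = 2 * n ^ 2 * (n - 1) * s ^ 2 := by
    rw [hX, hY]; linear_combination 2 * s ^ 2 * n * (n - 2) * hr2
  have P4 : (X - n * s) ^ 2 + (n - 1) * (Y - n * s) ^ 2 = 2 * n ^ 2 * (n - 1) * s ^ 2 := by
    rw [hX, hY]; linear_combination s ^ 2 * n * (n - 1) * hr2
  have hns1 : 1 < n * s ^ 2 := by nlinarith [hs2, hn1]
  -- scaled identities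
  have key1 : n * B ^ 2 + (A ^ 2 - B ^ 2) = n * s ^ 2 := by
    have h1 : n * B ^ 2 + (A ^ 2 - B ^ 2) = (X ^ 2 + (n-1) * Y ^ 2) / n ^ 2 := by
      rw [hA, hB]; field_simp; ring
    rw [h1, P1]; field_simp
  have key3 : n * (2*B) ^ 2 + ((A+B) ^ 2 - (2*B) ^ 2) + ((A+B) ^ 2 - (2*B) ^ 2) = 4 := by
    have h1 : n * (2*B) ^ 2 + ((A+B) ^ 2 - (2*B) ^ 2) + ((A+B) ^ 2 - (2*B) ^ 2)
        = (2 * (X + Y) ^ 2 + (n - 2) * 4 * Y ^ 2) / n ^ 2 := by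
      rw [hA, hB]; field_simp; ring
    rw [h1, P3]
    rw [div_eq_iff (by positivity : (n:ℝ) ^ 2 ≠ 0)]
    linear_combination 2 * n ^ 2 * hs2
  have key4 : n * (B+C) ^ 2 + ((A+C) ^ 2 - (B+C) ^ 2) = 4 := by
    have h1 : n * (B+C) ^ 2 + ((A+C) ^ 2 - (B+C) ^ 2)
        = ((X - n*s) ^ 2 + (n - 1) * (Y - n*s) ^ 2) / n ^ 2 := by
      rw [hA, hB, hC]; field_simp; ring
    rw [h1, P4]
    rw [div_eq_iff (by positivity : (n:ℝ) ^ 2 ≠ 0)]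
    linear_combination 2 * n ^ 2 * hs2
  -- basic inequalities on A B C
  have hApos : 0 < A := by
    rw [hA, hX]
    have : 0 < 1 + (n - 1) * r := by nlinarith
    have hn0' : 0 < n := by linarith
    positivity
  have hBA : B < A := by
    have h1 : A - B = s * r := by rw [hA, hB, hX, hY]; field_simp; ring
    have h2 : 0 < s * r := mul_pos hs0 (by linarith)
    linarith
  have hCA : C < A := by rw [hC]; linarith
  -- the family
  obtain ⟨v, hv⟩ : ∃ w : Fin (d+1) → EuclideanSpace ℝ (Fin d), w = vfam d A B C := ⟨_, rfl⟩
  have hvik : ∀ (i : Fin (d+1)) (k : Fin d),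
      v i k = if (i : ℕ) = d then C else if (k : ℕ) = (i : ℕ) then A else B :=
    fun i k => by rw [hv]; exact vfam_apply d A B C i k
  have hinj : Function.Injective v := by
    intro i j hij
    by_cases hi : (i : ℕ) = d <;> by_cases hj : (j : ℕ) = d
    · exact Fin.ext (hi.trans hj.symm)
    · exfalso
      have hjd : (j : ℕ) < d := lt_of_le_of_ne (Nat.lt_succ_iff.mp j.2) hj
      have := congrFun (congrArg WithLp.ofLp hij) ⟨(j : ℕ), hjd⟩
      rw [hvik, hvik] at this
      simp [hi, hj] at this
      exact hCA.ne this
    · exfalso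
      have hid : (i : ℕ) < d := lt_of_le_of_ne (Nat.lt_succ_iff.mp i.2) hi
      have := congrFun (congrArg WithLp.ofLp hij) ⟨(i : ℕ), hid⟩
      rw [hvik, hvik] at this
      simp [hi, hj] at this
      exact hCA.ne' this
    · by_contra hne
      have hij' : (i : ℕ) ≠ (j : ℕ) := fun h => hne (Fin.ext h)
      have hid : (i : ℕ) < d := lt_of_le_of_ne (Nat.lt_succ_iff.mp i.2) hi
      have := congrFun (congrArg WithLp.ofLp hij) ⟨(i : ℕ), hid⟩
      rw [hvik, hvik] at this
      simp [hi, hj, hij', Ne.symm hij'] at this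
      exact hBA.ne' this
  -- norms
  have hnorm : ∀ i, 1 < ‖v i‖ := by
    intro i
    rw [norm_eq_sqrt_sum]
    rw [show (1:ℝ) = Real.sqrt 1 by simp]
    apply Real.sqrt_lt_sqrt (by norm_num)
    by_cases hi : (i : ℕ) = d
    · have : ∀ k : Fin d, (v i k) ^ 2 = s ^ 2 := by
        intro k; rw [hvik]; simp [hi, hC]
      rw [Finset.sum_congr rfl fun k _ => this k, Finset.sum_const, card_univ,
        Fintype.card_fin, nsmul_eq_mul]
      rw [← hn]
      linarith [hns1]
    · have hid : (i : ℕ) < d := lt_of_le_of_ne (Nat.lt_succ_iff.mp i.2) hi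
      have hsum : ∑ k, (v i k) ^ 2 = (d:ℝ) * B ^ 2 + (A ^ 2 - B ^ 2) := by
        apply sum_one ⟨(i : ℕ), hid⟩
        intro k
        rw [hvik]
        simp only [hi, if_false]
        by_cases hk : (k : ℕ) = (i : ℕ)
        · rw [if_pos hk, if_pos (Fin.ext hk)]
        · rw [if_neg hk, if_neg (fun h => hk (by rw [h]))]
      rw [hsum, ← hn, key1]
      linarith [hns1]
  -- pairwise sums
  have hsum4 : ∀ i j : Fin (d+1), i ≠ j → ∑ k, ((v i + v j) k) ^ 2 = 4 := by
    have main : ∀ i j : Fin (d+1), i ≠ j → (j : ℕ) = d → ∑ k, ((v i + v j) k) ^ 2 = 4 := by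
      intro i j hij hj
      have hi : (i : ℕ) ≠ d := fun h => hij (Fin.ext (h.trans hj.symm))
      have hid : (i : ℕ) < d := lt_of_le_of_ne (Nat.lt_succ_iff.mp i.2) hi
      have hsum : ∑ k, ((v i + v j) k) ^ 2 = (d:ℝ) * (B+C) ^ 2 + ((A+C) ^ 2 - (B+C) ^ 2) := by
        apply sum_one ⟨(i : ℕ), hid⟩
        intro k
        rw [hv, vfam_add_apply, ← hv, hvik, hvik]
        simp only [hi, if_false, hj, if_true]
        by_cases hk : (k : ℕ) = (i : ℕ)
        · rw [if_pos hk, if_pos (Fin.ext hk)]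
        · rw [if_neg hk, if_neg (fun h => hk (by rw [h]))]
      rw [hsum, ← hn, key4]
    intro i j hij
    by_cases hi : (i : ℕ) = d
    · have : v i + v j = v j + v i := by rw [add_comm]
      rw [this]
      exact main j i (Ne.symm hij) hi
    · by_cases hj : (j : ℕ) = d
      · exact main i j hij hj
      · -- both below d
        have hid : (i : ℕ) < d := lt_of_le_of_ne (Nat.lt_succ_iff.mp i.2) hi
        have hjd : (j : ℕ) < d := lt_of_le_of_ne (Nat.lt_succ_iff.mp j.2) hj
        have hij' : (⟨(i:ℕ), hid⟩ : Fin d) ≠ ⟨(j:ℕ), hjd⟩ := by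
          intro h
          apply hij
          apply Fin.ext
          simpa using h
        have hsum : ∑ k, ((v i + v j) k) ^ 2
            = (d:ℝ) * (2*B) ^ 2 + ((A+B) ^ 2 - (2*B) ^ 2) + ((A+B) ^ 2 - (2*B) ^ 2) := by
          apply sum_two ⟨(i : ℕ), hid⟩ ⟨(j : ℕ), hjd⟩ hij'
          intro k
          rw [hv, vfam_add_apply, ← hv, hvik, hvik]
          simp only [hi, hj, if_false]
          have hijv : (i : ℕ) ≠ (j : ℕ) := fun h => hij (Fin.ext h)
          by_cases hk1 : (k : ℕ) = (i : ℕ)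
          · rw [if_pos hk1, if_neg (hk1 ▸ hijv), if_pos (Fin.ext hk1)]
            try ring
          · rw [if_neg hk1, if_neg (show ¬ k = ⟨(i:ℕ), hid⟩ from fun h => hk1 (by rw [h]))]
            by_cases hk2 : (k : ℕ) = (j : ℕ)
            · rw [if_pos hk2, if_pos (Fin.ext hk2)]
              try ring
            · rw [if_neg hk2, if_neg (show ¬ k = ⟨(j:ℕ), hjd⟩ from fun h => hk2 (by rw [h]))]
              try ring
        rw [hsum, ← hn, key3]
  refine ⟨Set.range v, ⟨?_, ?_⟩, ?_⟩
  · rintro x ⟨i, rfl⟩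
    exact hnorm i
  · rintro x ⟨i, rfl⟩ y ⟨j, rfl⟩ hxy
    have hij : i ≠ j := fun h => hxy (by rw [h])
    rw [norm_eq_sqrt_sum, hsum4 i j hij]
    rw [show (4:ℝ) = 2 ^ 2 by norm_num, Real.sqrt_sq (by norm_num)]
  · rw [← Set.image_univ, Set.ncard_image_of_injective _ hinj, Set.ncard_univ]
    simp

lemma mset_exists_one :
    ∃ S : Set (EuclideanSpace ℝ (Fin 1)),
      IsMSet (EuclideanSpace ℝ (Fin 1)) S ∧ S.ncard = 2 := by
  set x : EuclideanSpace ℝ (Fin 1) := EuclideanSpace.single 0 (4:ℝ) with hx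
  set y : EuclideanSpace ℝ (Fin 1) := EuclideanSpace.single 0 (-2:ℝ) with hy
  have hxy : x ≠ y := by
    intro h
    have := congrFun (congrArg WithLp.ofLp h) 0
    rw [hx, hy] at this
    simp [EuclideanSpace.single_apply] at this
    norm_num at this
  have hsum : x + y = EuclideanSpace.single 0 (2:ℝ) := by
    rw [hx, hy]
    ext k
    have : (x + y) k = x k + y k := rfl
    simp [EuclideanSpace.single_apply]
    split_ifs <;> norm_num
  refine ⟨{x, y}, ⟨?_, ?_⟩, ?_⟩
  · rintro z (rfl | rfl)
    · rw [hx, EuclideanSpace.norm_single]; norm_num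
    · rw [hy, EuclideanSpace.norm_single]; norm_num
  · rintro z (rfl | rfl) w (rfl | rfl) hzw
    · exact absurd rfl hzw
    · rw [hsum, EuclideanSpace.norm_single]; norm_num
    · rw [add_comm, hsum, EuclideanSpace.norm_single]; norm_num
    · exact absurd rfl hzw
  · exact Set.ncard_pair hxy

theorem mset_euclidean (d : ℕ) (hd : 1 ≤ d) :
    (∀ S : Set (EuclideanSpace ℝ (Fin d)),
      IsMSet (EuclideanSpace ℝ (Fin d)) S → S.Finite ∧ S.ncard ≤ d + 1) ∧
    ∃ S : Set (EuclideanSpace ℝ (Fin d)),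
      IsMSet (EuclideanSpace ℝ (Fin d)) S ∧ S.ncard = d + 1 := by
  constructor
  · exact fun S hS => mset_bound d S hS
  · rcases Nat.lt_or_ge d 2 with h | h
    · have hd1 : d = 1 := by omega
      subst hd1
      simpa using mset_exists_one
    · exact mset_exists_ge_two d h
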